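/- A finite connected simple graph G is a complete split graph if and only if G contains no induced subgraph isomorphic to any of P4, C4, or the paw. -/
import Mathlib


open SimpleGraph

/-- `G` contains no induced subgraph isomorphic to `H`. -/
def IndFree {V : Type*} {W : Type*} (G : SimpleGraph V) (H : SimpleGraph W) : Prop :=
  IsEmpty (H ↪g G)

/-- A complete split graph: a split graph in which every vertex of the stable
set is adjacent to every vertex of the clique. -/
def IsCompleteSplit {V : Type*} (G : SimpleGraph V) : Prop :=
  ∃ S K : Set V, S ∪ K = Set.univ ∧ Disjoint S K ∧
    (S.Pairwise fun a b => ¬ G.Adj a b) ∧ G.IsClique K ∧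
    ∀ a ∈ S, ∀ b ∈ K, G.Adj a b

/-- The paw: vertices `a,b,c,d = 0,1,2,3`, edges `ab, bc, ca, ad`. -/
def pawGraph : SimpleGraph (Fin 4) :=
  fromEdgeSet {s(0,1), s(1,2), s(2,0), s(0,3)}

section Aux

variable {V : Type*} (G : SimpleGraph V)

/-- The set of non-universal vertices. -/
def nonUniv : Set V := {v | ∃ w, w ≠ v ∧ ¬ G.Adj v w}

variable {G}

lemma mem_compl_nonUniv {v : V} (h : v ∈ (nonUniv G)ᶜ) :
    ∀ w, w ≠ v → G.Adj v w := by
  simp only [nonUniv, Set.mem_compl_iff, Set.mem_setOf_eq, not_exists, not_and, not_not] at h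
  exact h

lemma isCompleteSplit_of_indep
    (h : (nonUniv G).Pairwise fun a b => ¬ G.Adj a b) : IsCompleteSplit G := by
  refine ⟨nonUniv G, (nonUniv G)ᶜ, by simp, disjoint_compl_right, h, ?_, ?_⟩
  · intro a ha b hb hab
    exact mem_compl_nonUniv ha b (Ne.symm hab)
  · intro a ha b hb
    have hne : a ≠ b := fun h' => hb (h' ▸ ha)
    exact (mem_compl_nonUniv hb a hne).symm

lemma indep_of_isCompleteSplit (h : IsCompleteSplit G) :
    (nonUniv G).Pairwise fun a b => ¬ G.Adj a b := by
  obtain ⟨S, K, hUK, hdis, hS, hK, hSK⟩ := h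
  have hKuniv : ∀ a ∈ K, a ∉ nonUniv G := by
    rintro a ha ⟨w, hwa, hnadj⟩
    have hw : w ∈ S ∪ K := hUK ▸ Set.mem_univ w
    rcases hw with hw | hw
    · exact hnadj (hSK w hw a ha).symm
    · exact hnadj (hK hw ha hwa).symm
  intro a ha b hb hab
  have haS : a ∈ S := by
    rcases (hUK ▸ Set.mem_univ a : a ∈ S ∪ K) with h' | h'
    · exact h'
    · exact absurd ha (hKuniv a h')
  have hbS : b ∈ S := by
    rcases (hUK ▸ Set.mem_univ b : b ∈ S ∪ K) with h' | h'
    · exact h'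
    · exact absurd hb (hKuniv b h')
  exact hS haS hbS hab

/-- If the non-universal vertices are pairwise non-adjacent, then `G` has no induced
copy of any graph `H` that has an edge `i j` together with a non-neighbor of `i` and a
non-neighbor of `j`. -/
lemma indFree_of_indep {W : Type*} {H : SimpleGraph W}
    (hInd : (nonUniv G).Pairwise fun a b => ¬ G.Adj a b)
    (i j i' j' : W) (hij : H.Adj i j) (hi' : i' ≠ i) (hii' : ¬ H.Adj i i')
    (hj' : j' ≠ j) (hjj' : ¬ H.Adj j j') : IndFree G H := by
  constructor
  intro f
  have hadj : G.Adj (f i) (f j) := f.map_rel_iff.2 hij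
  have hiU : f i ∈ nonUniv G :=
    ⟨f i', fun h => hi' (f.injective h), fun h => hii' (f.map_rel_iff.1 h)⟩
  have hjU : f j ∈ nonUniv G :=
    ⟨f j', fun h => hj' (f.injective h), fun h => hjj' (f.map_rel_iff.1 h)⟩
  exact hInd hiU hjU (fun h => hij.ne (f.injective h)) hadj

/-- Build a graph embedding of a graph on `Fin 4` from four vertices. -/
def embed4 {H : SimpleGraph (Fin 4)} (f : Fin 4 → V)
    (hinj : Function.Injective f)
    (hrel : ∀ i j, G.Adj (f i) (f j) ↔ H.Adj i j) : H ↪g G :=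
  ⟨⟨f, hinj⟩, hrel _ _⟩

/-- Key lemma: in a connected, `P₄`-free, paw-free graph, each vertex off an edge is
adjacent to one of its endpoints. -/
lemma adj_of_edge (hP4 : IndFree G (pathGraph 4)) (hpaw : IndFree G pawGraph) :
    ∀ {c a : V} (_ : G.Walk c a) {b : V}, G.Adj a b → c ≠ a → c ≠ b →
      G.Adj a c ∨ G.Adj b c := by
  intro c a p
  induction p with
  | nil => intro b _ hca _; exact absurd rfl hca
  | @cons c x a h q ih =>
    intro b hab hca hcb
    by_cases hxa : x = a
    · subst hxa; exact Or.inl h.symm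
    by_cases hxb : x = b
    · subst hxb; exact Or.inr h.symm
    by_contra hcon
    push_neg at hcon
    obtain ⟨hnac, hnbc⟩ := hcon
    have hnca : ¬ G.Adj c a := fun h' => hnac h'.symm
    have hncb : ¬ G.Adj c b := fun h' => hnbc h'.symm
    have hcx : c ≠ x := h.ne
    have hxc : x ≠ c := h.ne'
    have habn : a ≠ b := hab.ne
    have hban : b ≠ a := hab.ne'
    have hac : a ≠ c := Ne.symm hca
    have hbc : b ≠ c := Ne.symm hcb
    have hax' : a ≠ x := Ne.symm hxa
    have hbx' : b ≠ x := Ne.symm hxb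
    have hxch : G.Adj x c := h.symm
    have hcxh : G.Adj c x := h
    by_cases hax : G.Adj a x <;> by_cases hbx : G.Adj b x
    · -- paw on x, a, b, c
      have hxa2 : G.Adj x a := hax.symm
      have hxb2 : G.Adj x b := hbx.symm
      have hba2 : G.Adj b a := hab.symm
      apply hpaw.false
      refine embed4 ![x, a, b, c] ?_ ?_
      · intro u v
        fin_cases u <;> fin_cases v <;> simp_all
      · intro u v
        fin_cases u <;> fin_cases v <;> simp_all [pawGraph]
    · -- P4 : c - x - a - b
      have hxa2 : G.Adj x a := hax.symm
      have hxbn : ¬ G.Adj x b := fun h' => hbx h'.symm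
      have hba2 : G.Adj b a := hab.symm
      apply hP4.false
      refine embed4 ![c, x, a, b] ?_ ?_
      · intro u v
        fin_cases u <;> fin_cases v <;> simp_all
      · intro u v
        fin_cases u <;> fin_cases v <;> simp_all [pathGraph_adj] <;> first | omega | decide
    · -- P4 : c - x - b - a
      have hxb2 : G.Adj x b := hbx.symm
      have hxan : ¬ G.Adj x a := fun h' => hax h'.symm
      have hba2 : G.Adj b a := hab.symm
      apply hP4.false
      refine embed4 ![c, x, b, a] ?_ ?_
      · intro u v
        fin_cases u <;> fin_cases v <;> simp_all
      · intro u v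
        fin_cases u <;> fin_cases v <;> simp_all [pathGraph_adj] <;> first | omega | decide
    · rcases ih hab hxa hxb with h' | h'
      · exact hax h'
      · exact hbx h'

end Aux

theorem stmt_1 {V : Type*} [Fintype V] (G : SimpleGraph V) (hconn : G.Connected) :
    IsCompleteSplit G ↔
      IndFree G (pathGraph 4) ∧ IndFree G (cycleGraph 4) ∧ IndFree G pawGraph := by
  constructor
  · intro h
    have hInd := indep_of_isCompleteSplit h
    refine ⟨?_, ?_, ?_⟩
    · exact indFree_of_indep hInd 1 2 3 0 (by simp [pathGraph_adj]) (by decide)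
        (by simp [pathGraph_adj] <;> omega) (by decide) (by simp [pathGraph_adj] <;> omega)
    · exact indFree_of_indep hInd 0 1 2 3 (by decide) (by decide) (by decide)
        (by decide) (by decide)
    · exact indFree_of_indep hInd 1 2 3 3 (by simp [pawGraph]) (by decide)
        (by simp [pawGraph]) (by decide) (by simp [pawGraph])
  · rintro ⟨hP4, hC4, hpaw⟩
    apply isCompleteSplit_of_indep
    rintro a ⟨c, hca, hac⟩ b ⟨d, hdb, hbd⟩ hne hab
    have hcb : c ≠ b := fun h => hac (h ▸ hab)
    have hda : d ≠ a := fun h => hbd (h ▸ hab.symm)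
    have hbc : G.Adj b c := by
      rcases adj_of_edge hP4 hpaw (hconn c a).some hab hca hcb with h | h
      · exact absurd h hac
      · exact h
    have had : G.Adj a d := by
      rcases adj_of_edge hP4 hpaw (hconn d b).some hab.symm hdb hda with h | h
      · exact absurd h hbd
      · exact h
    have hcd : c ≠ d := fun h => hbd (h ▸ hbc)
    have hcd' : G.Adj c d := by
      rcases adj_of_edge hP4 hpaw (hconn d b).some hbc hdb (Ne.symm hcd) with h | h
      · exact absurd h hbd
      · exact h
    -- induced C4 : a - b - c - d - a
    have hba : G.Adj b a := hab.symm
    have hcb2 : G.Adj c b := hbc.symm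
    have hdc : G.Adj d c := hcd'.symm
    have hda2 : G.Adj d a := had.symm
    have hnac : ¬ G.Adj a c := hac
    have hnca : ¬ G.Adj c a := fun h => hac h.symm
    have hnbd : ¬ G.Adj b d := hbd
    have hndb : ¬ G.Adj d b := fun h => hbd h.symm
    have h1 : a ≠ b := hne
    have h2 : b ≠ a := Ne.symm hne
    have h3 : a ≠ c := Ne.symm hca
    have h4 : b ≠ d := Ne.symm hdb
    have h5 : d ≠ c := Ne.symm hcd
    have h6 : a ≠ d := Ne.symm hda
    have h7 : b ≠ c := Ne.symm hcb
    apply hC4.false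
    refine embed4 ![a, b, c, d] ?_ ?_
    · intro u v
      fin_cases u <;> fin_cases v <;> simp_all
    · intro u v
      fin_cases u <;> fin_cases v <;> simp_all [cycleGraph] <;>
        first | assumption | decide | tauto
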